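/- Let K be a number field. For a Witt vector ξ ∈ W_{O_K}(O_K), the following four conditions are equivalent: (1) ξ is integral over O_K (with respect to the structure map sending c ∈ O_K to the constant vector with all coefficients c); (2) the set of coefficients C_ξ = { ξ_a : a ∈ I_K } is finite; (3) the orbit I_K·ξ = { ψ_a ξ : a ∈ I_K } under the shift operators is finite; (4) ξ is automatic. -/

import Mathlib

open NumberField

noncomputable section

/-- The multiplicative monoid `I_K` of nonzero ideals of the ring of integers of `K`. -/
def IdealMonoid (K : Type) [Field K] [NumberField K] : Submonoid (Ideal (𝓞 K)) where
  carrier := {I | I ≠ ⊥}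
  mul_mem' := by
    intro a b ha hb h
    rcases Ideal.mul_eq_bot.mp h with h' | h'
    · exact ha h'
    · exact hb h'
  one_mem' := by
    simp only [Set.mem_setOf_eq, Ideal.one_eq_top]
    exact top_ne_bot

/-- `I_K`, the monoid of nonzero ideals, as a type. -/
abbrev IK (K : Type) [Field K] [NumberField K] := ↥(IdealMonoid K)

/-- `P_K`, the set of nonzero prime ideals of `𝓞 K`, as a type. -/
def PrimeIdeal (K : Type) [Field K] [NumberField K] :=
  {p : Ideal (𝓞 K) // p.IsPrime ∧ p ≠ ⊥}

/-- A nonzero prime ideal, regarded as an element of `I_K`. -/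
def PrimeIdeal.toIK {K : Type} [Field K] [NumberField K] (p : PrimeIdeal K) : IK K :=
  ⟨p.1, p.2.2⟩

/-- `#k_p`: the cardinality of the residue ring `R ⧸ p`. -/
def residueCard {R : Type} [CommRing R] (p : Ideal R) : ℕ :=
  Nat.card (R ⧸ p)

/-- The shift operator `ψ_a` on `A^{I_K}`: `(ψ_a ξ)_b = ξ_{a·b}`. -/
def shift {K : Type} [Field K] [NumberField K] {A : Type} (a : IK K)
    (ξ : IK K → A) : IK K → A :=
  fun b => ξ (a * b)

/-- For an ideal `p` of `𝓞 K` and a subset `S ⊆ A^{I_K}`, the set `p·S` of all finite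
sums of products of elements of `p` with elements of (the module generated by) `S`. -/
def idealMulSet {K : Type} [Field K] [NumberField K] {A : Type} [CommRing A]
    [Algebra (𝓞 K) A] (p : Ideal (𝓞 K)) (S : Set (IK K → A)) : Set (IK K → A) :=
  ↑(p • Submodule.span (𝓞 K) S)

/-- The descending chain `U_n(A)` of subsets of `A^{I_K}`. -/
def UnSet (K : Type) [Field K] [NumberField K] (A : Type) [CommRing A]
    [Algebra (𝓞 K) A] : ℕ → Set (IK K → A)
  | 0 => Set.univ
  | n + 1 => {ξ | ξ ∈ UnSet K A n ∧ ∀ p : PrimeIdeal K,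
      shift p.toIK ξ - ξ ^ residueCard p.1 ∈ idealMulSet p.1 (UnSet K A n)}

/-- The ring of Witt vectors `W_{O_K}(A) = ⋂ₙ U_n(A)`, as a subset of `A^{I_K}`. -/
def WittSet (K : Type) [Field K] [NumberField K] (A : Type) [CommRing A]
    [Algebra (𝓞 K) A] : Set (IK K → A) :=
  ⋂ n, UnSet K A n

/-- A deterministic finite automaton with output, over input alphabet `Δ` and
output alphabet `O`. -/
structure DFAO (Δ O : Type) : Type 1 where
  State : Type
  [finState : Finite State]
  trans : State → Δ → State
  start : State
  out : State → O

/-- The output of a DFAO on an input word, processing letters from left to right. -/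
def DFAO.output {Δ O : Type} (M : DFAO Δ O) (l : List Δ) : O :=
  M.out (l.foldl M.trans M.start)

/-- `ξ ∈ A^{I_K}` is automatic if some DFAO with input alphabet `P_K` and output
alphabet `A` produces `ξ_a` from every word of primes whose product is `a`. -/
def IsAutomatic {K : Type} [Field K] [NumberField K] {A : Type}
    (ξ : IK K → A) : Prop :=
  ∃ M : DFAO (PrimeIdeal K) A, ∀ (l : List (PrimeIdeal K)) (a : IK K),
    (a : Ideal (𝓞 K)) = (l.map Subtype.val).prod → ξ a = M.output l

/-- `v_p(a)`: the largest `e` such that `p^e` divides `a`. -/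
def vIdeal {R : Type} [CommRing R] (p a : Ideal R) : ℕ :=
  sSup {e : ℕ | p ^ e ∣ a}

section
variable {K : Type} [Field K] [NumberField K]

-- basic shift lemmas
lemma shift_one (ξ : IK K → 𝓞 K) : shift 1 ξ = ξ := funext fun b => by simp [shift]

lemma shift_shift (a b : IK K) (ξ : IK K → 𝓞 K) :
    shift a (shift b ξ) = shift (b * a) ξ := by
  funext c; simp [shift, mul_assoc]

lemma shift_sub (a : IK K) (x y : IK K → 𝓞 K) :
    shift a (x - y) = shift a x - shift a y := rfl

lemma shift_add (a : IK K) (x y : IK K → 𝓞 K) :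
    shift a (x + y) = shift a x + shift a y := rfl

lemma shift_pow (a : IK K) (x : IK K → 𝓞 K) (n : ℕ) :
    shift a (x ^ n) = (shift a x) ^ n := rfl

def shiftL (a : IK K) : (IK K → 𝓞 K) →ₗ[𝓞 K] (IK K → 𝓞 K) where
  toFun := shift a
  map_add' _ _ := rfl
  map_smul' _ _ := rfl

end
open NumberField
section
variable {K : Type} [Field K] [NumberField K]

example (n : ℕ) : UnSet K (𝓞 K) (n+1) ⊆ UnSet K (𝓞 K) n := fun _ h => h.1

-- membership unfolding for idealMulSet
example (p : Ideal (𝓞 K)) (S : Set (IK K → 𝓞 K)) (x : IK K → 𝓞 K) :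
    x ∈ idealMulSet p S ↔ x ∈ p • Submodule.span (𝓞 K) S := Iff.rfl

-- values of elements of p^m • N lie in p^m
lemma values_mem_of_smul {p : Ideal (𝓞 K)} {m : ℕ} {N : Submodule (𝓞 K) (IK K → 𝓞 K)}
    {δ : IK K → 𝓞 K} (h : δ ∈ p ^ m • N) (b : IK K) : δ b ∈ p ^ m := by
  refine Submodule.smul_induction_on h ?_ ?_
  · intro r hr v _
    simpa using Ideal.mul_mem_right (v b) _ hr
  · intro x y hx hy
    simpa using Ideal.add_mem _ hx hy

lemma values_mem_of_smul' {p : Ideal (𝓞 K)} {N : Submodule (𝓞 K) (IK K → 𝓞 K)}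
    {δ : IK K → 𝓞 K} (h : δ ∈ p • N) (b : IK K) : δ b ∈ p := by
  have : δ ∈ p ^ 1 • N := by simpa using h
  simpa using values_mem_of_smul this b

-- shift stability of UnSet
lemma shift_mem_UnSet (a : IK K) : ∀ n, ∀ ξ ∈ UnSet K (𝓞 K) n,
    shift a ξ ∈ UnSet K (𝓞 K) n := by
  intro n
  induction n with
  | zero => intro ξ _; trivial
  | succ n ih =>
    intro ξ hξ
    refine ⟨ih ξ hξ.1, fun p => ?_⟩
    have key : shift p.toIK (shift a ξ) - (shift a ξ) ^ residueCard p.1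
        = shiftL a (shift p.toIK ξ - ξ ^ residueCard p.1) := by
      show _ = shift a (shift p.toIK ξ - ξ ^ residueCard p.1)
      rw [shift_sub, shift_shift, shift_pow, shift_shift, mul_comm]
    rw [key]
    have h2 := hξ.2 p
    change _ ∈ p.1 • Submodule.span (𝓞 K) (UnSet K (𝓞 K) n) at h2 ⊢
    have : Submodule.map (shiftL a) (p.1 • Submodule.span (𝓞 K) (UnSet K (𝓞 K) n))
        ≤ p.1 • Submodule.span (𝓞 K) (UnSet K (𝓞 K) n) := by
      rw [Submodule.map_smul'', Submodule.map_span]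
      refine Submodule.smul_mono le_rfl ?_
      refine Submodule.span_le.mpr ?_
      rintro _ ⟨u, hu, rfl⟩
      exact Submodule.subset_span (ih u hu)
    exact this (Submodule.mem_map_of_mem h2)

lemma shift_mem_WittSet (a : IK K) {ξ : IK K → 𝓞 K} (h : ξ ∈ WittSet K (𝓞 K)) :
    shift a ξ ∈ WittSet K (𝓞 K) := by
  refine Set.mem_iInter.mpr fun n => shift_mem_UnSet a n ξ (Set.mem_iInter.mp h n)

end
open NumberField
section
variable {K : Type} [Field K] [NumberField K]
set_option synthInstance.maxHeartbeats 1000000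
set_option maxHeartbeats 1000000

lemma primeIdeal_isMaximal (p : PrimeIdeal K) : p.1.IsMaximal :=
  Ideal.IsPrime.isMaximal p.2.1 p.2.2

lemma pow_residueCard_sub_mem (p : PrimeIdeal K) (c : 𝓞 K) :
    c ^ residueCard p.1 - c ∈ p.1 := by
  letI : Fintype ((𝓞 K) ⧸ p.1) := @Fintype.ofFinite _ (Ideal.finiteQuotientOfFreeOfNeBot p.1 p.2.2)
  haveI := primeIdeal_isMaximal p
  letI : Field ((𝓞 K) ⧸ p.1) := Ideal.Quotient.field p.1
  rw [← Ideal.Quotient.eq_zero_iff_mem]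
  have : residueCard p.1 = Fintype.card ((𝓞 K) ⧸ p.1) := Nat.card_eq_fintype_card
  rw [map_sub, map_pow, this, FiniteField.pow_card, sub_self]

lemma residueCard_cast_mem (p : PrimeIdeal K) :
    ((residueCard p.1 : ℕ) : 𝓞 K) ∈ p.1 := by
  letI : Fintype ((𝓞 K) ⧸ p.1) := @Fintype.ofFinite _ (Ideal.finiteQuotientOfFreeOfNeBot p.1 p.2.2)
  rw [← Ideal.Quotient.eq_zero_iff_mem]
  have : residueCard p.1 = Fintype.card ((𝓞 K) ⧸ p.1) := Nat.card_eq_fintype_card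
  rw [map_natCast, this, Nat.cast_card_eq_zero]

lemma residueCard_pos (p : PrimeIdeal K) : 0 < residueCard p.1 := by
  letI : Fintype ((𝓞 K) ⧸ p.1) := @Fintype.ofFinite _ (Ideal.finiteQuotientOfFreeOfNeBot p.1 p.2.2)
  have : residueCard p.1 = Fintype.card ((𝓞 K) ⧸ p.1) := Nat.card_eq_fintype_card
  rw [this]; exact Fintype.card_pos

/-- If `x ≡ y mod p^j` (`j ≥ 1`) then `x^q ≡ y^q mod p^(j+1)`. -/
lemma pow_q_congr (p : PrimeIdeal K) {x y : 𝓞 K} {j : ℕ} (hj : 1 ≤ j)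
    (h : x - y ∈ p.1 ^ j) : x ^ residueCard p.1 - y ^ residueCard p.1 ∈ p.1 ^ (j + 1) := by
  set q := residueCard p.1 with hq
  have hxy : x - y ∈ p.1 := Ideal.pow_le_self (by omega) h
  have geom : (∑ i ∈ Finset.range q, x ^ i * y ^ (q - 1 - i)) * (x - y) = x ^ q - y ^ q :=
    geom_sum₂_mul x y q
  have hS : (∑ i ∈ Finset.range q, x ^ i * y ^ (q - 1 - i)) ∈ p.1 := by
    have hterm : ∀ i ∈ Finset.range q, x ^ i * y ^ (q - 1 - i)
        = (x ^ i - y ^ i) * y ^ (q - 1 - i) + y ^ (q - 1) := by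
      intro i hi
      have hi' : i + (q - 1 - i) = q - 1 := by
        have := Finset.mem_range.mp hi; omega
      rw [sub_mul, ← pow_add, hi']; ring
    have hsplit : (∑ i ∈ Finset.range q, x ^ i * y ^ (q - 1 - i))
        = (∑ i ∈ Finset.range q, (x ^ i - y ^ i) * y ^ (q - 1 - i))
          + (q : 𝓞 K) * y ^ (q - 1) := by
      rw [Finset.sum_congr rfl hterm, Finset.sum_add_distrib, Finset.sum_const,
        Finset.card_range, nsmul_eq_mul]
    rw [hsplit]
    refine Ideal.add_mem _ (Ideal.sum_mem _ fun i _ => ?_) ?_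
    · obtain ⟨z, hz⟩ := sub_dvd_pow_sub_pow x y i
      rw [hz, mul_assoc]
      exact Ideal.mul_mem_right _ _ hxy
    · exact Ideal.mul_mem_right _ _ (residueCard_cast_mem p)
  have heq : x ^ q - y ^ q = (x - y) * (∑ i ∈ Finset.range q, x ^ i * y ^ (q - 1 - i)) := by
    rw [← geom, mul_comm]
  rw [heq, pow_succ]
  exact Ideal.mul_mem_mul h hS

end
open NumberField
section
variable {K : Type} [Field K] [NumberField K]
set_option maxHeartbeats 1000000

/-- decomposition of an iterated shift using the Witt congruence -/
lemma shift_pow_succ_eq (p : PrimeIdeal K) (u : IK K → 𝓞 K) (m : ℕ) :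
    shift (p.toIK ^ (m + 1)) u
      = (shift (p.toIK ^ m) u) ^ residueCard p.1
        + shift (p.toIK ^ m) (shift p.toIK u - u ^ residueCard p.1) := by
  rw [shift_sub, shift_shift, shift_pow, ← pow_succ']
  ring

/-- Key lemma K(m): for `u ∈ U_{m+1}`, `ψ_p^{m+1} u ≡ ψ_p^m u mod p^{m+1}` pointwise. -/
lemma keyK (p : PrimeIdeal K) : ∀ m : ℕ, ∀ u ∈ UnSet K (𝓞 K) (m + 1), ∀ b : IK K,
    shift (p.toIK ^ (m + 1)) u b - shift (p.toIK ^ m) u b ∈ p.1 ^ (m + 1) := by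
  intro m
  induction m with
  | zero =>
    intro u hu b
    have hδ := hu.2 p
    change _ ∈ p.1 • Submodule.span (𝓞 K) (UnSet K (𝓞 K) 0) at hδ
    have h1 : (shift p.toIK u - u ^ residueCard p.1) b ∈ p.1 := values_mem_of_smul' hδ b
    have h2 : u b ^ residueCard p.1 - u b ∈ p.1 := pow_residueCard_sub_mem p (u b)
    have : shift (p.toIK ^ 1) u b - shift (p.toIK ^ 0) u b
        = (shift p.toIK u - u ^ residueCard p.1) b + (u b ^ residueCard p.1 - u b) := by
      simp only [shift, pow_one, pow_zero, one_mul, Pi.sub_apply, Pi.pow_apply]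
      ring
    rw [this, pow_one]
    exact Ideal.add_mem _ h1 h2
  | succ m ih =>
    intro u hu b
    -- the span of U_{m+1} satisfies the conclusion of ih
    have hspan : ∀ v ∈ Submodule.span (𝓞 K) (UnSet K (𝓞 K) (m + 1)), ∀ c : IK K,
        shift (p.toIK ^ (m + 1)) v c - shift (p.toIK ^ m) v c ∈ p.1 ^ (m + 1) := by
      intro v hv
      induction hv using Submodule.span_induction with
      | mem x hx => exact ih x hx
      | zero => intro c; simp [shift]
      | add x y _ _ hx hy =>
        intro c
        have e : shift (p.toIK ^ (m + 1)) (x + y) c - shift (p.toIK ^ m) (x + y) c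
            = (shift (p.toIK ^ (m + 1)) x c - shift (p.toIK ^ m) x c)
              + (shift (p.toIK ^ (m + 1)) y c - shift (p.toIK ^ m) y c) := by
          simp only [shift, Pi.add_apply]; ring
        rw [e]; exact Ideal.add_mem _ (hx c) (hy c)
      | smul r x _ hx =>
        intro c
        have e : shift (p.toIK ^ (m + 1)) (r • x) c - shift (p.toIK ^ m) (r • x) c
            = r * (shift (p.toIK ^ (m + 1)) x c - shift (p.toIK ^ m) x c) := by
          simp only [shift, Pi.smul_apply, smul_eq_mul]; ring
        rw [e]; exact Ideal.mul_mem_left _ r (hx c)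
    -- δ ∈ p • span U_{m+1}, hence its iterated-shift difference lies in p^{m+2}
    have hδmem := hu.2 p
    change _ ∈ p.1 • Submodule.span (𝓞 K) (UnSet K (𝓞 K) (m + 1)) at hδmem
    set δ := shift p.toIK u - u ^ residueCard p.1 with hδdef
    have hδ : ∀ c : IK K, shift (p.toIK ^ (m + 1)) δ c - shift (p.toIK ^ m) δ c
        ∈ p.1 ^ (m + 2) := by
      intro c
      refine Submodule.smul_induction_on hδmem ?_ ?_
      · intro r hr v hv
        have e : shift (p.toIK ^ (m + 1)) (r • v) c - shift (p.toIK ^ m) (r • v) c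
            = r * (shift (p.toIK ^ (m + 1)) v c - shift (p.toIK ^ m) v c) := by
          simp only [shift, Pi.smul_apply, smul_eq_mul]; ring
        rw [e]
        have := Ideal.mul_mem_mul hr (hspan v hv c)
        rwa [← pow_succ'] at this
      · intro x y hx hy
        have e : shift (p.toIK ^ (m + 1)) (x + y) c - shift (p.toIK ^ m) (x + y) c
            = (shift (p.toIK ^ (m + 1)) x c - shift (p.toIK ^ m) x c)
              + (shift (p.toIK ^ (m + 1)) y c - shift (p.toIK ^ m) y c) := by
          simp only [shift, Pi.add_apply]; ring
        rw [e]; exact Ideal.add_mem _ hx hy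
    -- main computation
    have e1 := shift_pow_succ_eq p u (m + 1)
    have e2 := shift_pow_succ_eq p u m
    have hdiff : shift (p.toIK ^ (m + 2)) u b - shift (p.toIK ^ (m + 1)) u b
        = (shift (p.toIK ^ (m + 1)) u b ^ residueCard p.1
            - shift (p.toIK ^ m) u b ^ residueCard p.1)
          + (shift (p.toIK ^ (m + 1)) δ b - shift (p.toIK ^ m) δ b) := by
      have e1' := congrFun e1 b
      have e2' := congrFun e2 b
      simp only [Pi.add_apply, Pi.pow_apply] at e1' e2'
      rw [← hδdef] at e1' e2'
      rw [e1', e2']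
      ring
    rw [hdiff]
    refine Ideal.add_mem _ ?_ (hδ b)
    exact pow_q_congr p (by omega) (ih u hu.1 b)
end
open NumberField
section
variable {K : Type} [Field K] [NumberField K]
set_option maxHeartbeats 1000000
set_option synthInstance.maxHeartbeats 1000000

lemma keyK_smul (p : PrimeIdeal K) (m : ℕ) {δ : IK K → 𝓞 K}
    (hδmem : δ ∈ p.1 • Submodule.span (𝓞 K) (UnSet K (𝓞 K) (m + 1))) (c : IK K) :
    shift (p.toIK ^ (m + 1)) δ c - shift (p.toIK ^ m) δ c ∈ p.1 ^ (m + 2) := by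
  have hspan : ∀ v ∈ Submodule.span (𝓞 K) (UnSet K (𝓞 K) (m + 1)), ∀ c : IK K,
      shift (p.toIK ^ (m + 1)) v c - shift (p.toIK ^ m) v c ∈ p.1 ^ (m + 1) := by
    intro v hv
    induction hv using Submodule.span_induction with
    | mem x hx => exact keyK p m x hx
    | zero => intro c; simp [shift]
    | add x y _ _ hx hy =>
      intro c
      have e : shift (p.toIK ^ (m + 1)) (x + y) c - shift (p.toIK ^ m) (x + y) c
          = (shift (p.toIK ^ (m + 1)) x c - shift (p.toIK ^ m) x c)
            + (shift (p.toIK ^ (m + 1)) y c - shift (p.toIK ^ m) y c) := by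
        simp only [shift, Pi.add_apply]; ring
      rw [e]; exact Ideal.add_mem _ (hx c) (hy c)
    | smul r x _ hx =>
      intro c
      have e : shift (p.toIK ^ (m + 1)) (r • x) c - shift (p.toIK ^ m) (r • x) c
          = r * (shift (p.toIK ^ (m + 1)) x c - shift (p.toIK ^ m) x c) := by
        simp only [shift, Pi.smul_apply, smul_eq_mul]; ring
      rw [e]; exact Ideal.mul_mem_left _ r (hx c)
  refine Submodule.smul_induction_on hδmem ?_ ?_
  · intro r hr v hv
    have e : shift (p.toIK ^ (m + 1)) (r • v) c - shift (p.toIK ^ m) (r • v) c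
        = r * (shift (p.toIK ^ (m + 1)) v c - shift (p.toIK ^ m) v c) := by
      simp only [shift, Pi.smul_apply, smul_eq_mul]; ring
    rw [e]
    have := Ideal.mul_mem_mul hr (hspan v hv c)
    rwa [← pow_succ'] at this
  · intro x y hx hy
    have e : shift (p.toIK ^ (m + 1)) (x + y) c - shift (p.toIK ^ m) (x + y) c
        = (shift (p.toIK ^ (m + 1)) x c - shift (p.toIK ^ m) x c)
          + (shift (p.toIK ^ (m + 1)) y c - shift (p.toIK ^ m) y c) := by
      simp only [shift, Pi.add_apply]; ring
    rw [e]; exact Ideal.add_mem _ hx hy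

lemma mem_UnSet_of_witt {ξ : IK K → 𝓞 K} (hξ : ξ ∈ WittSet K (𝓞 K)) (n : ℕ) :
    ξ ∈ UnSet K (𝓞 K) n := Set.mem_iInter.mp hξ n

/-- level-1 congruence: `ξ_{pb} ≡ ξ_b^q mod p`. -/
lemma wittC1 {ξ : IK K → 𝓞 K} (hξ : ξ ∈ WittSet K (𝓞 K)) (p : PrimeIdeal K) (b : IK K) :
    ξ (p.toIK * b) - ξ b ^ residueCard p.1 ∈ p.1 := by
  have h1 := (mem_UnSet_of_witt hξ 1).2 p
  change _ ∈ p.1 • Submodule.span (𝓞 K) (UnSet K (𝓞 K) 0) at h1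
  have := values_mem_of_smul' h1 b
  simpa only [shift, Pi.sub_apply, Pi.pow_apply] using this

/-- deep congruence: `(ξ_{p^{m+2}b} - ξ_{p^{m+1}b}^q) ≡ (ξ_{p^{m+1}b} - ξ_{p^m b}^q) mod p^{m+2}`. -/
lemma wittC2 {ξ : IK K → 𝓞 K} (hξ : ξ ∈ WittSet K (𝓞 K)) (p : PrimeIdeal K) (m : ℕ)
    (b : IK K) :
    (ξ (p.toIK ^ (m + 2) * b) - ξ (p.toIK ^ (m + 1) * b) ^ residueCard p.1)
      - (ξ (p.toIK ^ (m + 1) * b) - ξ (p.toIK ^ m * b) ^ residueCard p.1)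
      ∈ p.1 ^ (m + 2) := by
  have hδ := (mem_UnSet_of_witt hξ (m + 2)).2 p
  change _ ∈ p.1 • Submodule.span (𝓞 K) (UnSet K (𝓞 K) (m + 1)) at hδ
  have h := keyK_smul p m hδ b
  have e1 : p.toIK * (p.toIK ^ (m + 1) * b) = p.toIK ^ (m + 2) * b := by
    rw [← mul_assoc, ← pow_succ']
  have e2 : p.toIK * (p.toIK ^ m * b) = p.toIK ^ (m + 1) * b := by
    rw [← mul_assoc, ← pow_succ']
  simp only [shift, Pi.sub_apply, Pi.pow_apply] at h
  rw [e1, e2] at h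
  exact h

/-- decomposition: if `b ∤ J` then some prime power divides `b` but not `J`. -/
lemma exists_primePow_dvd_not_dvd {b J : Ideal (𝓞 K)} (hb : b ≠ ⊥) (hJ : J ≠ ⊥)
    (hnd : ¬ b ∣ J) :
    ∃ (p : PrimeIdeal K) (k : ℕ), 1 ≤ k ∧ p.1 ^ k ∣ b ∧ ¬ p.1 ^ k ∣ J := by
  classical
  have hb0 : b ≠ 0 := by rwa [Ideal.zero_eq_bot]
  have hJ0 : J ≠ 0 := by rwa [Ideal.zero_eq_bot]
  have hle : ¬ (UniqueFactorizationMonoid.normalizedFactors b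
      ≤ UniqueFactorizationMonoid.normalizedFactors J) := fun h => hnd
    ((UniqueFactorizationMonoid.dvd_iff_normalizedFactors_le_normalizedFactors hb0 hJ0).mpr h)
  obtain ⟨P, hP⟩ : ∃ P, (UniqueFactorizationMonoid.normalizedFactors J).count P
      < (UniqueFactorizationMonoid.normalizedFactors b).count P := by
    by_contra h
    push_neg at h
    exact hle (Multiset.le_iff_count.mpr fun a => h a)
  have hPmem : P ∈ UniqueFactorizationMonoid.normalizedFactors b :=
    Multiset.count_pos.mp (lt_of_le_of_lt (Nat.zero_le _) hP)
  have hPprime : Prime P := UniqueFactorizationMonoid.prime_of_normalized_factor P hPmem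
  have hP0 : P ≠ 0 := hPprime.ne_zero
  have hPbot : P ≠ ⊥ := by rwa [Ideal.zero_eq_bot] at hP0
  set k := (UniqueFactorizationMonoid.normalizedFactors b).count P with hk
  refine ⟨⟨P, Ideal.isPrime_of_prime hPprime, hPbot⟩, k, ?_, ?_, ?_⟩
  · have := Multiset.count_pos.mpr hPmem; omega
  · have hrep : Multiset.replicate k P ≤ UniqueFactorizationMonoid.normalizedFactors b :=
      Multiset.le_count_iff_replicate_le.mp le_rfl
    have hd : (Multiset.replicate k P).prod
        ∣ (UniqueFactorizationMonoid.normalizedFactors b).prod :=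
      Multiset.prod_dvd_prod_of_le hrep
    rw [Multiset.prod_replicate] at hd
    exact hd.trans (UniqueFactorizationMonoid.prod_normalizedFactors hb0).dvd
  · intro hdvd
    have h1 : UniqueFactorizationMonoid.normalizedFactors (P ^ k)
        ≤ UniqueFactorizationMonoid.normalizedFactors J :=
      (UniqueFactorizationMonoid.dvd_iff_normalizedFactors_le_normalizedFactors
        (pow_ne_zero _ hP0) hJ0).mp hdvd
    have h2 : UniqueFactorizationMonoid.normalizedFactors (P ^ k)
        = Multiset.replicate k P := by
      rw [UniqueFactorizationMonoid.normalizedFactors_pow,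
        UniqueFactorizationMonoid.normalizedFactors_irreducible hPprime.irreducible,
        normalize_eq, Multiset.nsmul_singleton]
    have h3 := Multiset.le_iff_count.mp h1 P
    rw [h2, Multiset.count_replicate_self] at h3
    omega
end
open NumberField
section
variable {K : Type} [Field K] [NumberField K]
set_option maxHeartbeats 1000000
set_option synthInstance.maxHeartbeats 1000000

lemma absNorm_primeIdeal_two_le (p : PrimeIdeal K) : 2 ≤ Ideal.absNorm p.1 := by
  have h0 : Ideal.absNorm p.1 ≠ 0 := by
    rw [Ne, Ideal.absNorm_eq_zero_iff]
    exact p.2.2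
  have h1 : Ideal.absNorm p.1 ≠ 1 := by
    rw [Ne, Ideal.absNorm_eq_one_iff]
    exact p.2.1.ne_top
  omega

lemma absNorm_IK_ne_zero (b : IK K) : Ideal.absNorm b.1 ≠ 0 := by
  rw [Ne, Ideal.absNorm_eq_zero_iff]; exact b.2

/-- The key injectivity: two elements of the Witt set with values in `Set.range ξ` that agree
on divisors of `J` agree everywhere. -/
lemma witt_eq_of_agree_on_divisors {ξ : IK K → 𝓞 K} (hfin : (Set.range ξ).Finite)
    {J : Ideal (𝓞 K)} (hJ : J ≠ ⊥)
    (hsep : ∀ c c' : 𝓞 K, c ∈ Set.range ξ → c' ∈ Set.range ξ →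
      ∀ I : Ideal (𝓞 K), c - c' ∈ I → ¬ I ∣ J → c = c')
    {η η' : IK K → 𝓞 K} (hη : η ∈ WittSet K (𝓞 K)) (hη' : η' ∈ WittSet K (𝓞 K))
    (hr : ∀ b, η b ∈ Set.range ξ) (hr' : ∀ b, η' b ∈ Set.range ξ)
    (hagree : ∀ b : IK K, b.1 ∣ J → η b = η' b) : η = η' := by
  suffices H : ∀ (n : ℕ) (b : IK K), Ideal.absNorm b.1 = n → η b = η' b by
    funext b; exact H _ b rfl
  intro n
  induction n using Nat.strong_induction_on with
  | _ n IH =>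
  intro b hN
  by_cases hd : b.1 ∣ J
  · exact hagree b hd
  · obtain ⟨p, k, hk1, hdvd, hnd⟩ := exists_primePow_dvd_not_dvd b.2 hJ hd
    obtain ⟨c', hc'⟩ := hdvd
    have hc'bot : c' ≠ ⊥ := by
      intro h; exact b.2 (by rw [hc', h, Ideal.mul_bot])
    set c : IK K := ⟨c', hc'bot⟩ with hcdef
    have hb : b = p.toIK ^ k * c := by
      apply Subtype.ext
      show b.1 = ((p.toIK ^ k : IK K) : Ideal (𝓞 K)) * c'
      rw [SubmonoidClass.coe_pow]
      exact hc'
    -- norms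
    have hNp := absNorm_primeIdeal_two_le p
    have hNc := absNorm_IK_ne_zero c
    have hsmall : ∀ j, j < k → Ideal.absNorm ((p.toIK ^ j * c) : IK K).1 < Ideal.absNorm b.1 := by
      intro j hj
      have hcoe : ∀ i : ℕ, ((p.toIK ^ i * c : IK K) : Ideal (𝓞 K)) = p.1 ^ i * c' := by
        intro i
        show ((p.toIK ^ i * c : IK K) : Ideal (𝓞 K)) = _
        rw [Submonoid.coe_mul, SubmonoidClass.coe_pow]
        rfl
      have h1 : Ideal.absNorm ((p.toIK ^ j * c : IK K) : Ideal (𝓞 K))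
          = Ideal.absNorm p.1 ^ j * Ideal.absNorm c' := by
        rw [hcoe j, map_mul, map_pow]
      have h2 : Ideal.absNorm (b : Ideal (𝓞 K))
          = Ideal.absNorm p.1 ^ k * Ideal.absNorm c' := by
        rw [hb, hcoe k, map_mul, map_pow]
      rw [h1, h2]
      exact mul_lt_mul_of_pos_right (pow_lt_pow_right₀ (by omega) hj)
        (Nat.pos_of_ne_zero hNc)
    have hIH : ∀ j, j < k → η (p.toIK ^ j * c) = η' (p.toIK ^ j * c) := by
      intro j hj
      exact IH _ (hN ▸ hsmall j hj) _ rfl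
    -- split on k = 1 or k ≥ 2
    rcases k with _ | k'
    · omega
    rcases k' with _ | m
    ·
      have h1 := wittC1 hη p c
      have h1' := wittC1 hη' p c
      have hcc : η c = η' c := by
        have := hIH 0 (by omega)
        simpa using this
      have hmem : η b - η' b ∈ p.1 := by
        have e : η b - η' b
            = (η (p.toIK * c) - η c ^ residueCard p.1)
              - (η' (p.toIK * c) - η' c ^ residueCard p.1) := by
          have hb1 : b = p.toIK * c := by rw [hb, pow_one]
          rw [hb1, hcc]; ring
        rw [e]
        exact Ideal.sub_mem _ h1 h1'
      exact hsep (η b) (η' b) (hr b) (hr' b) p.1 hmem (by simpa using hnd)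
    ·
      have h2 := wittC2 hη p m c
      have h2' := wittC2 hη' p m c
      have e1 : η (p.toIK ^ (m + 1) * c) = η' (p.toIK ^ (m + 1) * c) := hIH (m + 1) (by omega)
      have e0 : η (p.toIK ^ m * c) = η' (p.toIK ^ m * c) := hIH m (by omega)
      have hmem : η b - η' b ∈ p.1 ^ (m + 2) := by
        have hb2 : b = p.toIK ^ (m + 2) * c := by rw [hb]
        have e : η b - η' b
            = ((η (p.toIK ^ (m + 2) * c) - η (p.toIK ^ (m + 1) * c) ^ residueCard p.1)
                - (η (p.toIK ^ (m + 1) * c) - η (p.toIK ^ m * c) ^ residueCard p.1))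
              - ((η' (p.toIK ^ (m + 2) * c) - η' (p.toIK ^ (m + 1) * c) ^ residueCard p.1)
                - (η' (p.toIK ^ (m + 1) * c) - η' (p.toIK ^ m * c) ^ residueCard p.1)) := by
          rw [hb2, e1, e0]; ring
        rw [e]
        exact Ideal.sub_mem _ h2 h2'
      exact hsep (η b) (η' b) (hr b) (hr' b) (p.1 ^ (m + 2)) hmem hnd

end
open NumberField
section
variable {K : Type} [Field K] [NumberField K]
set_option maxHeartbeats 2000000
set_option synthInstance.maxHeartbeats 1000000

lemma aeval_apply (ξ : IK K → 𝓞 K) (f : Polynomial (𝓞 K)) (a : IK K) :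
    (Polynomial.aeval ξ f) a = Polynomial.eval (ξ a) f := by
  have h := Polynomial.hom_eval₂ f (algebraMap (𝓞 K) (IK K → 𝓞 K))
    (Pi.evalRingHom (fun _ : IK K => 𝓞 K) a) ξ
  have hcomp : (Pi.evalRingHom (fun _ : IK K => 𝓞 K) a).comp
      (algebraMap (𝓞 K) (IK K → 𝓞 K)) = RingHom.id (𝓞 K) := by
    ext c; rfl
  rw [Polynomial.aeval_def]
  rw [show (Polynomial.eval₂ (algebraMap (𝓞 K) (IK K → 𝓞 K)) ξ f) a
      = (Pi.evalRingHom (fun _ : IK K => 𝓞 K) a)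
        (Polynomial.eval₂ (algebraMap (𝓞 K) (IK K → 𝓞 K)) ξ f) from rfl]
  rw [h, hcomp]
  rfl

/-- (1) → (2) -/
lemma range_finite_of_isIntegral {ξ : IK K → 𝓞 K} (h : IsIntegral (𝓞 K) ξ) :
    (Set.range ξ).Finite := by
  obtain ⟨f, hf, hev⟩ := h
  have hroot : ∀ a : IK K, Polynomial.IsRoot f (ξ a) := by
    intro a
    have := congrFun hev a
    rw [show Polynomial.eval₂ (algebraMap (𝓞 K) (IK K → 𝓞 K)) ξ f
        = Polynomial.aeval ξ f from rfl] at this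
    have h2 := aeval_apply ξ f a
    rw [this] at h2
    exact h2.symm
  refine Set.Finite.subset (Polynomial.finite_setOf_isRoot hf.ne_zero) ?_
  rintro _ ⟨a, rfl⟩
  exact hroot a

/-- (2) → (1) -/
lemma isIntegral_of_range_finite {ξ : IK K → 𝓞 K} (h : (Set.range ξ).Finite) :
    IsIntegral (𝓞 K) ξ := by
  classical
  set f : Polynomial (𝓞 K) := ∏ c ∈ h.toFinset, (Polynomial.X - Polynomial.C c) with hf
  refine ⟨f, Polynomial.monic_prod_of_monic _ _ fun c _ => Polynomial.monic_X_sub_C c, ?_⟩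
  rw [show Polynomial.eval₂ (algebraMap (𝓞 K) (IK K → 𝓞 K)) ξ f
      = Polynomial.aeval ξ f from rfl]
  funext a
  rw [show (0 : IK K → 𝓞 K) a = 0 from rfl]
  rw [aeval_apply, hf, Polynomial.eval_prod]
  refine Finset.prod_eq_zero (Set.Finite.mem_toFinset h |>.mpr ⟨a, rfl⟩) ?_
  simp

/-- (3) → (4): the orbit automaton. -/
lemma isAutomatic_of_orbit_finite {ξ : IK K → 𝓞 K}
    (h : (Set.range fun a : IK K => shift a ξ).Finite) : IsAutomatic ξ := by
  haveI := h.to_subtype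
  let S := ↥(Set.range fun a : IK K => shift a ξ)
  let T : S → PrimeIdeal K → S := fun s p => ⟨shift p.toIK s.1, by
    obtain ⟨a, ha⟩ := s.2
    exact ⟨p.toIK * a, by rw [← ha, shift_shift, mul_comm]⟩⟩
  have key : ∀ (l : List (PrimeIdeal K)) (s : S),
      (List.foldl T s l).1 = shift ((l.map PrimeIdeal.toIK).prod) s.1 := by
    intro l
    induction l with
    | nil => intro s; simp [shift_one]
    | cons p l ih =>
      intro s
      rw [List.foldl_cons, ih]
      change shift ((l.map PrimeIdeal.toIK).prod) (shift p.toIK s.1) = _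
      rw [shift_shift, List.map_cons, List.prod_cons]
  refine ⟨⟨S, T, ⟨ξ, ⟨1, shift_one ξ⟩⟩, fun s => s.1 1⟩, ?_⟩
  intro l a hprod
  show ξ a = (List.foldl T ⟨ξ, ⟨1, shift_one ξ⟩⟩ l).1 1
  rw [key l]
  have haeq : a = (l.map PrimeIdeal.toIK).prod := by
    apply Subtype.ext
    rw [hprod, SubmonoidClass.coe_list_prod, List.map_map]
    rfl
  show ξ a = shift ((l.map PrimeIdeal.toIK).prod) ξ 1
  rw [← haeq]
  show ξ a = ξ (a * 1)
  rw [mul_one]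

/-- every element of `I_K` is a product of primes -/
lemma exists_primeList (a : IK K) :
    ∃ l : List (PrimeIdeal K), (a : Ideal (𝓞 K)) = (l.map Subtype.val).prod := by
  classical
  have ha0 : (a : Ideal (𝓞 K)) ≠ 0 := by rw [Ideal.zero_eq_bot]; exact a.2
  obtain ⟨f, hprime, hassoc⟩ := UniqueFactorizationMonoid.exists_prime_factors
    (a : Ideal (𝓞 K)) ha0
  have hprod : f.prod = (a : Ideal (𝓞 K)) := associated_iff_eq.mp hassoc
  refine ⟨f.toList.pmap (fun I hI => (⟨I, Ideal.isPrime_of_prime hI, by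
      rw [← Ideal.zero_eq_bot]; exact hI.ne_zero⟩ : PrimeIdeal K))
    (fun I hI => hprime I (Multiset.mem_toList.mp hI)), ?_⟩
  erw [List.map_pmap, List.pmap_eq_map, List.map_id', Multiset.prod_toList, hprod]

/-- (4) → (2) -/
lemma range_finite_of_isAutomatic {ξ : IK K → 𝓞 K} (h : IsAutomatic ξ) :
    (Set.range ξ).Finite := by
  obtain ⟨M, hM⟩ := h
  haveI := M.finState
  refine Set.Finite.subset (Set.finite_range M.out) ?_
  rintro _ ⟨a, rfl⟩
  obtain ⟨l, hl⟩ := exists_primeList a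
  rw [hM l a hl]
  exact ⟨_, rfl⟩

end
open NumberField
section
variable {K : Type} [Field K] [NumberField K]
set_option maxHeartbeats 2000000
set_option synthInstance.maxHeartbeats 1000000

/-- (2) → (3): the hard implication. -/
lemma orbit_finite_of_range_finite {ξ : IK K → 𝓞 K} (hξ : ξ ∈ WittSet K (𝓞 K))
    (hfin : (Set.range ξ).Finite) :
    (Set.range fun a : IK K => shift a ξ).Finite := by
  classical
  set D : Finset (𝓞 K) :=
    ((hfin.toFinset ×ˢ hfin.toFinset).image fun cc => cc.1 - cc.2).erase 0 with hD
  set J : Ideal (𝓞 K) := ∏ d ∈ D, Ideal.span {d} with hJdef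
  have hJ0 : J ≠ 0 := by
    rw [hJdef, Finset.prod_ne_zero_iff]
    intro d hd
    have hd0 : d ≠ 0 := (Finset.mem_erase.mp hd).1
    simpa [Ideal.zero_eq_bot, Ideal.span_singleton_eq_bot] using hd0
  have hJ : J ≠ ⊥ := by rwa [Ideal.zero_eq_bot] at hJ0
  have hsep : ∀ c c' : 𝓞 K, c ∈ Set.range ξ → c' ∈ Set.range ξ →
      ∀ I : Ideal (𝓞 K), c - c' ∈ I → ¬ I ∣ J → c = c' := by
    intro c c' hc hc' I hmem hnd
    by_contra hne
    apply hnd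
    have hdD : c - c' ∈ D := Finset.mem_erase.mpr ⟨sub_ne_zero.mpr hne,
      Finset.mem_image.mpr ⟨(c, c'), Finset.mem_product.mpr
        ⟨hfin.mem_toFinset.mpr hc, hfin.mem_toFinset.mpr hc'⟩, rfl⟩⟩
    have h1 : Ideal.span {c - c'} ∣ J := Finset.dvd_prod_of_mem _ hdD
    have h2 : I ∣ Ideal.span {c - c'} := by
      rw [Ideal.dvd_iff_le, Ideal.span_singleton_le_iff_mem]
      exact hmem
    exact h2.trans h1
  haveI : Fintype {I : Ideal (𝓞 K) // I ∣ J} :=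
    UniqueFactorizationMonoid.fintypeSubtypeDvd J hJ0
  set X : Set (IK K → 𝓞 K) := {η | η ∈ WittSet K (𝓞 K) ∧ ∀ b, η b ∈ Set.range ξ} with hX
  have hXfin : X.Finite := by
    have hne : ∀ d : {I : Ideal (𝓞 K) // I ∣ J}, d.1 ≠ ⊥ := by
      intro d hbot
      rw [← Ideal.zero_eq_bot] at hbot
      exact ne_zero_of_dvd_ne_zero hJ0 d.2 hbot
    set F : (IK K → 𝓞 K) → ({I : Ideal (𝓞 K) // I ∣ J} → 𝓞 K) :=
      fun η d => η ⟨d.1, hne d⟩ with hF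
    refine Set.Finite.of_finite_image (f := F) ?_ ?_
    · refine Set.Finite.subset (Set.Finite.pi
        (fun _ : {I : Ideal (𝓞 K) // I ∣ J} => hfin)) ?_
      rintro _ ⟨η, hη, rfl⟩
      exact fun i _ => hη.2 _
    · intro η hη η' hη' hFeq
      refine witt_eq_of_agree_on_divisors hfin hJ hsep hη.1 hη'.1 hη.2 hη'.2 ?_
      intro b hb
      exact congrFun hFeq ⟨b.1, hb⟩
  apply hXfin.subset
  rintro _ ⟨a, rfl⟩
  exact ⟨shift_mem_WittSet a hξ, fun b => ⟨a * b, rfl⟩⟩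

end

/-- base case of the arithmetic Christol theorem: for `ξ ∈ W_{O_K}(O_K)`,
the following are equivalent: (1) `ξ` is integral over `O_K`; (2) the set of
coefficients of `ξ` is finite; (3) the orbit of `ξ` under the shifts is finite;
(4) `ξ` is automatic. -/
theorem christol_base_case (K : Type) [Field K] [NumberField K]
    (ξ : IK K → 𝓞 K) (hξ : ξ ∈ WittSet K (𝓞 K)) :
    List.TFAE [IsIntegral (𝓞 K) ξ,
      (Set.range ξ).Finite,
      (Set.range fun a : IK K => shift a ξ).Finite,
      IsAutomatic ξ] := by
  tfae_have 1 → 2 := range_finite_of_isIntegral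
  tfae_have 2 → 1 := isIntegral_of_range_finite
  tfae_have 2 → 3 := orbit_finite_of_range_finite hξ
  tfae_have 3 → 4 := isAutomatic_of_orbit_finite
  tfae_have 4 → 2 := range_finite_of_isAutomatic
  tfae_finish

end
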